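/- Let 0 < α ≤ 1 and let real coefficients w₁, w₂, w₃, a₂₁, a₃₁, a₃₂, c₂^α, c₃^α satisfy the 3-stage order conditions w₁+w₂+w₃ = 1/Γ(α+1), a₂₁ = c₂^α/Γ(α+1), a₃₁+a₃₂ = c₃^α/Γ(α+1), w₂c₂^α + w₃c₃^α = Γ(α+1)/Γ(2α+1), and w₃a₃₂c₂^α = Γ(α+1)/Γ(3α+1). Then for all real z and y, with K₁ = z·y, K₂ = z·(y + a₂₁K₁), K₃ = z·(y + a₃₁K₁ + a₃₂K₂), one has y + w₁K₁ + w₂K₂ + w₃K₃ = (1 + z/Γ(α+1) + z²/Γ(2α+1) + z³/Γ(3α+1)) · y. Hence the 3-stage EFORK method applied to ᶜD^α y = λy has growth factor E(z) = 1 + z/Γ(α+1) + z²/Γ(2α+1) + z³/Γ(3α+1) with z = λh^α. -/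

import Mathlib

/-- Growth factor of the 3-stage EFORK method applied to the test equation `ᶜD^α y = λ y`:
under the order conditions, one step maps `y` to
`(1 + z/Γ(α+1) + z²/Γ(2α+1) + z³/Γ(3α+1))·y` with `z = λ h^α`. -/
theorem efork3_growth_factor
    (α : ℝ) (hα : 0 < α ∧ α ≤ 1)
    (w₁ w₂ w₃ a₂₁ a₃₁ a₃₂ c2a c3a : ℝ)
    (h1 : w₁ + w₂ + w₃ = 1 / Real.Gamma (α + 1))
    (h2 : a₂₁ = c2a / Real.Gamma (α + 1))
    (h3 : a₃₁ + a₃₂ = c3a / Real.Gamma (α + 1))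
    (h4 : w₂ * c2a + w₃ * c3a = Real.Gamma (α + 1) / Real.Gamma (2 * α + 1))
    (h5 : w₃ * a₃₂ * c2a = Real.Gamma (α + 1) / Real.Gamma (3 * α + 1)) :
    ∀ z y : ℝ,
      y + w₁ * (z * y) + w₂ * (z * (y + a₂₁ * (z * y))) +
          w₃ * (z * (y + a₃₁ * (z * y) + a₃₂ * (z * (y + a₂₁ * (z * y))))) =
        (1 + z / Real.Gamma (α + 1) + z ^ 2 / Real.Gamma (2 * α + 1) +
            z ^ 3 / Real.Gamma (3 * α + 1)) * y := by
  intro z y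
  have hg1 : Real.Gamma (α + 1) ≠ 0 := (Real.Gamma_pos_of_pos (by linarith [hα.1])).ne'
  have hg2 : Real.Gamma (2 * α + 1) ≠ 0 := (Real.Gamma_pos_of_pos (by linarith [hα.1])).ne'
  have hg3 : Real.Gamma (3 * α + 1) ≠ 0 := (Real.Gamma_pos_of_pos (by linarith [hα.1])).ne'
  linear_combination (norm := skip)
    (z * y) * h1 + (z ^ 2 * y * w₂) * h2 + (z ^ 3 * y * w₃ * a₃₂) * h2 +
    (z ^ 2 * y * w₃) * h3 + (z ^ 2 * y / Real.Gamma (α + 1)) * h4 +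
    (z ^ 3 * y / Real.Gamma (α + 1)) * h5
  field_simp
  ring
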